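/- arXiv:1709.10042 — 6 statements merged into one kernel-verified Lean document; each statement's English description precedes it below -/
import Mathlib

section
/- The set of double-ended forks forms an infinite antichain under the induced subgraph order: for m ≠ n, the double-ended fork F_m is not an induced subgraph of F_n. -/
/-- The double-ended fork `F_n` (for `n ≥ 1`): a path on the `n` vertices
`2, 3, …, n+1`, together with two pendant leaves `0, 1` attached to the
endpoint `2`, and two pendant leaves `n+2, n+3` attached to the endpoint `n+1`. -/
def doubleEndedFork (n : ℕ) : SimpleGraph (Fin (n + 4)) :=
  SimpleGraph.fromRel (fun i j =>
    ((i : ℕ) = 0 ∧ (j : ℕ) = 2) ∨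
    ((i : ℕ) = 1 ∧ (j : ℕ) = 2) ∨
    (2 ≤ (i : ℕ) ∧ (i : ℕ) + 1 = (j : ℕ) ∧ (j : ℕ) ≤ n + 1) ∨
    ((i : ℕ) = n + 1 ∧ (j : ℕ) = n + 2) ∨
    ((i : ℕ) = n + 1 ∧ (j : ℕ) = n + 3))

/-- Adjacency of `doubleEndedFork n` as a relation on natural number values. -/
def nadj (n i j : ℕ) : Prop :=
  ((i = 0 ∧ j = 2) ∨ (i = 1 ∧ j = 2) ∨ (2 ≤ i ∧ i + 1 = j ∧ j ≤ n + 1) ∨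
    (i = n + 1 ∧ j = n + 2) ∨ (i = n + 1 ∧ j = n + 3)) ∨
  ((j = 0 ∧ i = 2) ∨ (j = 1 ∧ i = 2) ∨ (2 ≤ j ∧ j + 1 = i ∧ i ≤ n + 1) ∨
    (j = n + 1 ∧ i = n + 2) ∨ (j = n + 1 ∧ i = n + 3))

lemma nadj_of_adj {k : ℕ} {a b : Fin (k + 4)} (h : (doubleEndedFork k).Adj a b) :
    nadj k (a : ℕ) (b : ℕ) := by
  rw [doubleEndedFork, SimpleGraph.fromRel_adj] at h
  exact h.2

lemma adj_of_nadj {k : ℕ} {a b : Fin (k + 4)} (h : nadj k (a : ℕ) (b : ℕ)) :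
    (doubleEndedFork k).Adj a b := by
  rw [doubleEndedFork, SimpleGraph.fromRel_adj]
  refine ⟨fun hab => ?_, h⟩
  rw [hab] at h
  unfold nadj at h
  omega

/-- A vertex with three distinct neighbours is `2` or `n + 1`. -/
lemma deg3 {n v a b c : ℕ} (hn : 2 ≤ n) (hab : a ≠ b) (hac : a ≠ c) (hbc : b ≠ c)
    (h1 : nadj n v a) (h2 : nadj n v b) (h3 : nadj n v c) : v = 2 ∨ v = n + 1 := by
  unfold nadj at h1 h2 h3; omega

/-- The leaves `0`, `1` have unique neighbour `2`. -/
lemma leaf_low {n a b : ℕ} (hn : 2 ≤ n) (ha : a = 0 ∨ a = 1) (h : nadj n a b) : b = 2 := by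
  unfold nadj at h; omega

/-- The leaves `n+2`, `n+3` have unique neighbour `n+1`. -/
lemma leaf_high {n a b : ℕ} (hn : 2 ≤ n) (ha : a = n + 2 ∨ a = n + 3) (h : nadj n a b) :
    b = n + 1 := by
  unfold nadj at h; omega

/-- Internal path vertices have exactly two neighbours. -/
lemma path_nbrs {n k b : ℕ} (hk : 3 ≤ k) (hk2 : k ≤ n) (h : nadj n k b) :
    b = k - 1 ∨ b = k + 1 := by
  unfold nadj at h; omega

/-- Neighbours of vertex `2` (for `n ≥ 2`). -/
lemma nbrs_two {n b : ℕ} (hn : 2 ≤ n) (h : nadj n 2 b) : b = 0 ∨ b = 1 ∨ b = 3 := by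
  unfold nadj at h; omega

/-- Neighbours of vertex `n+1` (for `n ≥ 2`). -/
lemma nbrs_top {n b : ℕ} (hn : 2 ≤ n) (h : nadj n (n + 1) b) :
    b = n ∨ b = n + 2 ∨ b = n + 3 := by
  unfold nadj at h; omega

/-- The double-ended forks form an infinite antichain under the induced subgraph
order: for `m ≠ n` (both at least 1), `F_m` is not an induced subgraph of `F_n`. -/
theorem doubleEndedForks_antichain (m n : ℕ) (hm : 1 ≤ m) (hn : 1 ≤ n) (hmn : m ≠ n) :
    IsEmpty (doubleEndedFork m ↪g doubleEndedFork n) := by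
  constructor
  intro f
  rcases Nat.lt_or_ge n m with hlt | hge
  · -- `m > n`: too many vertices
    have := Fintype.card_le_of_embedding f.toEmbedding
    simp only [Fintype.card_fin] at this
    omega
  have hmn' : m < n := by omega
  have hn2 : 2 ≤ n := by omega
  -- the embedding on natural-number values
  set g : ℕ → ℕ := fun i => if h : i < m + 4 then ((f ⟨i, h⟩ : Fin (n + 4)) : ℕ) else 0
    with hgdef
  have hginj : ∀ i j : ℕ, i < m + 4 → j < m + 4 → g i = g j → i = j := by
    intro i j hi hj hgij
    simp only [hgdef, dif_pos hi, dif_pos hj] at hgij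
    exact congrArg Fin.val (f.injective (Fin.val_injective hgij))
  have gne : ∀ i j : ℕ, i < m + 4 → j < m + 4 → i ≠ j → g i ≠ g j :=
    fun i j hi hj hij h => hij (hginj i j hi hj h)
  have hgadj : ∀ i j : ℕ, (hi : i < m + 4) → (hj : j < m + 4) → nadj m i j →
      nadj n (g i) (g j) := by
    intro i j hi hj hij
    simp only [hgdef, dif_pos hi, dif_pos hj]
    exact nadj_of_adj (f.map_rel_iff.2 (adj_of_nadj (a := ⟨i, hi⟩) (b := ⟨j, hj⟩) hij))
  by_cases hm1 : m = 1
  · -- `F_1` is a star with four leaves; `F_n` (n ≥ 2) has max degree 3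
    subst hm1
    have h0 : nadj n (g 2) (g 0) := hgadj 2 0 (by omega) (by omega) (by unfold nadj; omega)
    have h1 : nadj n (g 2) (g 1) := hgadj 2 1 (by omega) (by omega) (by unfold nadj; omega)
    have h3 : nadj n (g 2) (g 3) := hgadj 2 3 (by omega) (by omega) (by unfold nadj; omega)
    have h4 : nadj n (g 2) (g 4) := hgadj 2 4 (by omega) (by omega) (by unfold nadj; omega)
    have d01 := gne 0 1 (by omega) (by omega) (by omega)
    have d03 := gne 0 3 (by omega) (by omega) (by omega)
    have d04 := gne 0 4 (by omega) (by omega) (by omega)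
    have d13 := gne 1 3 (by omega) (by omega) (by omega)
    have d14 := gne 1 4 (by omega) (by omega) (by omega)
    have d34 := gne 3 4 (by omega) (by omega) (by omega)
    rcases deg3 hn2 d01 d03 d13 h0 h1 h3 with hv | hv <;> rw [hv] at h0 h1 h3 h4
    · have := nbrs_two hn2 h0
      have := nbrs_two hn2 h1
      have := nbrs_two hn2 h3
      have := nbrs_two hn2 h4
      omega
    · have := nbrs_top hn2 h0
      have := nbrs_top hn2 h1
      have := nbrs_top hn2 h3
      have := nbrs_top hn2 h4
      omega
  have hm2 : 2 ≤ m := by omega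
  -- both branch vertices of F_m map to branch vertices of F_n
  have h2mem : g 2 = 2 ∨ g 2 = n + 1 :=
    deg3 hn2 (gne 0 1 (by omega) (by omega) (by omega))
      (gne 0 3 (by omega) (by omega) (by omega))
      (gne 1 3 (by omega) (by omega) (by omega))
      (hgadj 2 0 (by omega) (by omega) (by unfold nadj; omega))
      (hgadj 2 1 (by omega) (by omega) (by unfold nadj; omega))
      (hgadj 2 3 (by omega) (by omega) (by unfold nadj; omega))
  have htopmem : g (m + 1) = 2 ∨ g (m + 1) = n + 1 :=
    deg3 hn2 (gne m (m + 2) (by omega) (by omega) (by omega))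
      (gne m (m + 3) (by omega) (by omega) (by omega))
      (gne (m + 2) (m + 3) (by omega) (by omega) (by omega))
      (hgadj (m + 1) m (by omega) (by omega) (by unfold nadj; omega))
      (hgadj (m + 1) (m + 2) (by omega) (by omega) (by unfold nadj; omega))
      (hgadj (m + 1) (m + 3) (by omega) (by omega) (by unfold nadj; omega))
  have e34 : nadj n (g 3) (g 4) := hgadj 3 4 (by omega) (by omega) (by unfold nadj; omega)
  have d42 := gne 4 2 (by omega) (by omega) (by omega)
  rcases h2mem with hg2 | hg2
  · -- g fixes the path pointwise
    have h23 : nadj n 2 (g 3) := by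
      have := hgadj 2 3 (by omega) (by omega) (by unfold nadj; omega)
      rwa [hg2] at this
    have hg3 : g 3 = 3 := by
      rcases nbrs_two hn2 h23 with h | h | h
      · exfalso; rw [h] at e34
        have h4 := leaf_low hn2 (Or.inl rfl) e34
        exact d42 (by omega)
      · exfalso; rw [h] at e34
        have h4 := leaf_low hn2 (Or.inr rfl) e34
        exact d42 (by omega)
      · exact h
    have key : ∀ k : ℕ, 2 ≤ k → k ≤ m → g k = k ∧ g (k + 1) = k + 1 := by
      intro k hk
      induction k, hk using Nat.le_induction with
      | base => exact fun _ => ⟨hg2, hg3⟩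
      | succ k hk ih =>
        intro hkm
        obtain ⟨h1, h2⟩ := ih (by omega)
        refine ⟨h2, ?_⟩
        rw [show k + 1 + 1 = k + 2 from rfl]
        have e : nadj n (g (k + 1)) (g (k + 2)) :=
          hgadj (k + 1) (k + 2) (by omega) (by omega) (by unfold nadj; omega)
        rw [h2] at e
        have hmem := path_nbrs (by omega) (by omega) e
        have hne := gne (k + 2) k (by omega) (by omega) (by omega)
        rw [h1] at hne
        omega
    have := (key m (by omega) (by omega)).2
    omega
  · -- g reverses the path
    have h23 : nadj n (n + 1) (g 3) := by
      have := hgadj 2 3 (by omega) (by omega) (by unfold nadj; omega)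
      rwa [hg2] at this
    have hg3 : g 3 = n := by
      rcases nbrs_top hn2 h23 with h | h | h
      · exact h
      · exfalso; rw [h] at e34
        have h4 := leaf_high hn2 (Or.inl rfl) e34
        exact d42 (by omega)
      · exfalso; rw [h] at e34
        have h4 := leaf_high hn2 (Or.inr rfl) e34
        exact d42 (by omega)
    have key : ∀ k : ℕ, 2 ≤ k → k ≤ m → g k = n + 3 - k ∧ g (k + 1) = n + 2 - k := by
      intro k hk
      induction k, hk using Nat.le_induction with
      | base =>
        intro _
        refine ⟨?_, ?_⟩
        · rw [show n + 3 - 2 = n + 1 from by omega]; exact hg2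
        · rw [show (2 : ℕ) + 1 = 3 from rfl, show n + 2 - 2 = n from by omega]; exact hg3
      | succ k hk ih =>
        intro hkm
        obtain ⟨h1, h2⟩ := ih (by omega)
        refine ⟨by omega, ?_⟩
        rw [show k + 1 + 1 = k + 2 from rfl]
        have e : nadj n (g (k + 1)) (g (k + 2)) :=
          hgadj (k + 1) (k + 2) (by omega) (by omega) (by unfold nadj; omega)
        rw [h2] at e
        have hmem := path_nbrs (by omega) (by omega) e
        have hne := gne (k + 2) k (by omega) (by omega) (by omega)
        rw [h1] at hne
        omega
    have := (key m (by omega) (by omega)).2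
    omega
end

section
/- Paths labelled by a two-element antichain form an infinite antichain under the labelled induced subgraph order: for m < n, the path P_m with both endpoints colored white and interior vertices colored black does not labelled-embed into the similarly colored path P_n. -/
/-- The colouring of the path `P_n` in which the two endpoints are white (`true`)
and all interior vertices are black (`false`). -/
def pathEndColoring (n : ℕ) (v : Fin n) : Bool :=
  decide ((v : ℕ) = 0 ∨ (v : ℕ) = n - 1)

/-- Paths labelled by a two-element antichain form an infinite antichain in the
labelled induced subgraph order: for `2 ≤ m < n`, the path `P_m` with white
endpoints and black interior does not labelled-embed into the similarly
coloured path `P_n` (labels from an antichain must be preserved exactly). -/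
theorem labelled_paths_antichain (m n : ℕ) (hm : 2 ≤ m) (hmn : m < n) :
    ¬ ∃ f : SimpleGraph.pathGraph m ↪g SimpleGraph.pathGraph n,
        ∀ v : Fin m, pathEndColoring n (f v) = pathEndColoring m v := by
  rintro ⟨f, h⟩
  have h0m : (0 : ℕ) < m := by omega
  -- the image of the first vertex is an endpoint
  have h0 := h ⟨0, h0m⟩
  simp only [pathEndColoring, decide_eq_decide] at h0
  have h0' : (f ⟨0, h0m⟩).val = 0 ∨ (f ⟨0, h0m⟩).val = n - 1 := by
    rw [h0]; left; trivial
  have key : ∀ k, ∀ hk : k < m,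
      ((f ⟨0, h0m⟩).val = 0 → (f ⟨k, hk⟩).val = k) ∧
      ((f ⟨0, h0m⟩).val = n - 1 → (f ⟨k, hk⟩).val = n - 1 - k) := by
    intro k
    induction k using Nat.strong_induction_on with
    | _ k ih =>
      match k with
      | 0 =>
        intro hk
        constructor <;> intro hv <;> simpa using hv
      | 1 =>
        intro hk
        have hadj : (SimpleGraph.pathGraph m).Adj ⟨0, h0m⟩ ⟨1, hk⟩ := by
          rw [SimpleGraph.pathGraph_adj]; left; rfl
        have hadj' := f.map_rel_iff.mpr hadj
        rw [SimpleGraph.pathGraph_adj] at hadj'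
        have hlt : (f ⟨1, hk⟩).val < n := (f ⟨1, hk⟩).isLt
        constructor <;> intro hv <;> omega
      | (k+2) =>
        intro hk
        have hk1 : k + 1 < m := by omega
        have hk0 : k < m := by omega
        have ih1 := ih (k+1) (by omega) hk1
        have ih0 := ih k (by omega) hk0
        have hadj : (SimpleGraph.pathGraph m).Adj ⟨k+1, hk1⟩ ⟨k+2, hk⟩ := by
          rw [SimpleGraph.pathGraph_adj]; left; rfl
        have hadj' := f.map_rel_iff.mpr hadj
        rw [SimpleGraph.pathGraph_adj] at hadj'
        have hne : (f ⟨k, hk0⟩).val ≠ (f ⟨k+2, hk⟩).val := by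
          intro hcontra
          have : (⟨k, hk0⟩ : Fin m) = ⟨k+2, hk⟩ := f.injective (Fin.ext hcontra)
          simp [Fin.ext_iff] at this
        have hlt : (f ⟨k+2, hk⟩).val < n := (f ⟨k+2, hk⟩).isLt
        constructor <;> intro hv <;>
          [ (have e1 := ih1.1 hv; have e0 := ih0.1 hv);
            (have e1 := ih1.2 hv; have e0 := ih0.2 hv)] <;> omega
  have hm1 : m - 1 < m := by omega
  have hlast := h ⟨m - 1, hm1⟩
  simp only [pathEndColoring, decide_eq_decide] at hlast
  have hlast' : (f ⟨m - 1, hm1⟩).val = 0 ∨ (f ⟨m - 1, hm1⟩).val = n - 1 := by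
    rw [hlast]; right; trivial
  have hk := key (m - 1) hm1
  rcases h0' with hv | hv
  · have := hk.1 hv; omega
  · have := hk.2 hv; omega
end

section
/- Every 2-well-quasi-ordered hereditary class of graphs is defined by finitely many minimal forbidden induced subgraphs; that is, the set of minimal forbidden induced subgraphs of a 2-wqo class is finite. -/
/-- A finite graph: a number of vertices together with a simple graph on them. -/
abbrev FinGraph := Σ n : ℕ, SimpleGraph (Fin n)

/-- `H` is (isomorphic to) an induced subgraph of `G`. -/
def IsInducedSubgraph (H G : FinGraph) : Prop :=
  Nonempty (H.2 ↪g G.2)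

/-- A hereditary class of finite graphs: closed under (isomorphism and)
taking induced subgraphs. -/
def Hereditary (C : Set FinGraph) : Prop :=
  ∀ G ∈ C, ∀ H : FinGraph, IsInducedSubgraph H G → H ∈ C

/-- A labelled induced subgraph embedding of `(H, kH)` into `(G, kG)`, where the
labels come from the two-element antichain `Bool` (so labels must match exactly). -/
def LabelledEmb (H G : FinGraph) (kH : Fin H.1 → Bool) (kG : Fin G.1 → Bool) : Prop :=
  ∃ f : H.2 ↪g G.2, ∀ v, kG (f v) = kH v

/-- A class `C` is `2`-well-quasi-ordered if in every infinite sequence of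
graphs from `C` labelled by the two-element antichain, some earlier term
labelled-embeds into a later one. -/
def TwoWqo (C : Set FinGraph) : Prop :=
  ∀ (G : ℕ → FinGraph) (l : ∀ i, Fin (G i).1 → Bool),
    (∀ i, G i ∈ C) →
    ∃ i j, i < j ∧ LabelledEmb (G i) (G j) (l i) (l j)

/-- `G` is a minimal forbidden induced subgraph of the class `C`: `G ∉ C` and
every proper induced subgraph (one with strictly fewer vertices) lies in `C`. -/
def MinimalForbidden (C : Set FinGraph) (G : FinGraph) : Prop :=
  G ∉ C ∧ ∀ H : FinGraph, IsInducedSubgraph H G → H.1 < G.1 → H ∈ C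

open Classical in
/-- Delete the last vertex of a finite graph. -/
noncomputable def delGraph (G : FinGraph) : FinGraph :=
  ⟨G.1 - 1, G.2.comap (Fin.castLE (Nat.sub_le G.1 1))⟩

open Classical in
/-- Label the remaining vertices by adjacency to the deleted vertex. -/
noncomputable def delLabel (G : FinGraph) (hG : 1 ≤ G.1) : Fin (G.1 - 1) → Bool :=
  fun v => decide (G.2.Adj (Fin.castLE (Nat.sub_le G.1 1) v) ⟨G.1 - 1, Nat.sub_lt hG one_pos⟩)

lemma delGraph_isInduced (G : FinGraph) : IsInducedSubgraph (delGraph G) G :=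
  ⟨SimpleGraph.Embedding.comap (Fin.castLEEmb (Nat.sub_le G.1 1)) G.2⟩

lemma delGraph_card (G : FinGraph) (hG : 1 ≤ G.1) : (delGraph G).1 < G.1 :=
  Nat.sub_lt hG one_pos

lemma glue (Gi Gj : FinGraph) (hi : 1 ≤ Gi.1) (hj : 1 ≤ Gj.1)
    (h : LabelledEmb (delGraph Gi) (delGraph Gj) (delLabel Gi hi) (delLabel Gj hj)) :
    IsInducedSubgraph Gi Gj := by
  classical
  obtain ⟨f, hf⟩ := h
  set ti : Fin Gi.1 := ⟨Gi.1 - 1, Nat.sub_lt hi one_pos⟩ with hti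
  set tj : Fin Gj.1 := ⟨Gj.1 - 1, Nat.sub_lt hj one_pos⟩ with htj
  have hlab : ∀ v : Fin (Gi.1 - 1),
      Gj.2.Adj (Fin.castLE (Nat.sub_le Gj.1 1) (f v)) tj ↔
      Gi.2.Adj (Fin.castLE (Nat.sub_le Gi.1 1) v) ti := by
    intro v
    have := hf v
    simpa [delLabel, decide_eq_decide] using this
  have hfadj : ∀ a b : Fin (Gi.1 - 1),
      Gj.2.Adj (Fin.castLE (Nat.sub_le Gj.1 1) (f a)) (Fin.castLE (Nat.sub_le Gj.1 1) (f b)) ↔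
      Gi.2.Adj (Fin.castLE (Nat.sub_le Gi.1 1) a) (Fin.castLE (Nat.sub_le Gi.1 1) b) := by
    intro a b
    have := f.map_adj_iff (v := a) (w := b)
    simpa [delGraph, SimpleGraph.comap_adj] using this
  -- the glued map
  let g : Fin Gi.1 → Fin Gj.1 := fun x =>
    if h : (x : ℕ) < Gi.1 - 1 then Fin.castLE (Nat.sub_le Gj.1 1) (f ⟨x, h⟩) else tj
  have hcast : ∀ (x : Fin Gi.1) (h : (x : ℕ) < Gi.1 - 1),
      Fin.castLE (Nat.sub_le Gi.1 1) (⟨(x : ℕ), h⟩ : Fin (Gi.1 - 1)) = x := by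
    intro x h; ext; rfl
  have htop : ∀ x : Fin Gi.1, ¬ (x : ℕ) < Gi.1 - 1 → x = ti := by
    intro x hx
    have h1 : (x : ℕ) ≤ Gi.1 - 1 := Nat.le_sub_one_of_lt x.isLt
    exact Fin.ext (le_antisymm h1 (not_lt.mp hx))
  have hglt : ∀ (x : Fin (Gi.1 - 1)), ((Fin.castLE (Nat.sub_le Gj.1 1) (f x) : Fin Gj.1) : ℕ) < Gj.1 - 1 :=
    fun x => (f x).isLt
  refine ⟨⟨⟨g, ?_⟩, ?_⟩⟩
  · -- injective
    intro a b hab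
    by_cases ha : (a : ℕ) < Gi.1 - 1 <;> by_cases hb : (b : ℕ) < Gi.1 - 1
    · simp only [g, dif_pos ha, dif_pos hb] at hab
      have : (⟨(a : ℕ), ha⟩ : Fin (Gi.1 - 1)) = ⟨(b : ℕ), hb⟩ := by
        apply f.injective
        apply Fin.castLE_injective _ hab
      have := congrArg Fin.val this
      exact Fin.ext this
    · simp only [g, dif_pos ha, dif_neg hb] at hab
      exact absurd (congrArg Fin.val hab) (Nat.ne_of_lt (hglt ⟨(a : ℕ), ha⟩))
    · simp only [g, dif_neg ha, dif_pos hb] at hab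
      exact absurd (congrArg Fin.val hab).symm (Nat.ne_of_lt (hglt ⟨(b : ℕ), hb⟩))
    · rw [htop a ha, htop b hb]
  · -- map_rel_iff
    intro a b
    show Gj.2.Adj (g a) (g b) ↔ Gi.2.Adj a b
    by_cases ha : (a : ℕ) < Gi.1 - 1 <;> by_cases hb : (b : ℕ) < Gi.1 - 1
    · simp only [g, dif_pos ha, dif_pos hb]
      refine (hfadj ⟨a, ha⟩ ⟨b, hb⟩).trans ?_
      rw [hcast a ha, hcast b hb]
    · simp only [g, dif_pos ha, dif_neg hb]
      refine (hlab ⟨a, ha⟩).trans ?_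
      rw [hcast a ha, htop b hb]
    · simp only [g, dif_neg ha, dif_pos hb]
      rw [SimpleGraph.adj_comm]
      refine (hlab ⟨b, hb⟩).trans ?_
      rw [hcast b hb, htop a ha, SimpleGraph.adj_comm]
    · simp only [g, dif_neg ha, dif_neg hb]
      rw [htop a ha, htop b hb]
      simp [SimpleGraph.irrefl]

/-- Every 2-well-quasi-ordered hereditary class of graphs has only finitely
many minimal forbidden induced subgraphs. -/
theorem twoWqo_finitely_many_minimal_forbidden (C : Set FinGraph)
    (hC : Hereditary C) (h2 : TwoWqo C) :
    {G : FinGraph | MinimalForbidden C G}.Finite := by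
  classical
  by_contra hinf
  set S := {G : FinGraph | MinimalForbidden C G} with hS
  -- the set of sizes is infinite
  have himg : (Sigma.fst '' S).Infinite := by
    intro hfin
    apply hinf
    have : S ⊆ ⋃ n ∈ Sigma.fst '' S, {G : FinGraph | G.1 = n} := by
      intro G hG
      simp only [Set.mem_iUnion]
      exact ⟨G.1, ⟨G, hG, rfl⟩, rfl⟩
    refine Set.Finite.subset (Set.Finite.biUnion hfin ?_) this
    intro n _
    have : {G : FinGraph | G.1 = n} ⊆ Sigma.mk n '' Set.univ := by
      rintro ⟨m, Gm⟩ h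
      simp only [Set.mem_setOf_eq] at h
      subst h
      exact ⟨Gm, trivial, rfl⟩
    exact Set.Finite.subset ((Set.finite_univ).image _) this
  -- a strictly increasing sequence of sizes, all ≥ 1
  have hgt : ∀ a : ℕ, ∃ b ∈ Sigma.fst '' S, a < b := fun a => himg.exists_gt a
  choose nf hnf1 hnf2 using hgt
  let nseq : ℕ → ℕ := fun k => Nat.rec (nf 0) (fun _ prev => nf prev) k
  have hmono : StrictMono nseq := strictMono_nat_of_lt_succ (fun n => hnf2 (nseq n))
  have hmem : ∀ k, nseq k ∈ Sigma.fst '' S := by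
    intro k; cases k with
    | zero => exact hnf1 0
    | succ m => exact hnf1 (nseq m)
  have hpos : ∀ k, 1 ≤ nseq k := by
    intro k
    calc 1 ≤ nseq 0 := hnf2 0
    _ ≤ nseq k := hmono.monotone (Nat.zero_le k)
  -- choose the graphs
  have hGs : ∀ k, ∃ G ∈ S, G.1 = nseq k := by
    intro k; obtain ⟨G, hG, hGe⟩ := hmem k; exact ⟨G, hG, hGe⟩
  choose Gs hGsS hGscard using hGs
  have hGpos : ∀ k, 1 ≤ (Gs k).1 := fun k => (hGscard k) ▸ hpos k
  -- apply 2-wqo to the vertex-deleted graphs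
  have hdelC : ∀ k, delGraph (Gs k) ∈ C := by
    intro k
    exact (hGsS k).2 (delGraph (Gs k)) (delGraph_isInduced (Gs k))
      (delGraph_card (Gs k) (hGpos k))
  obtain ⟨i, j, hij, hemb⟩ := h2 (fun k => delGraph (Gs k))
    (fun k => delLabel (Gs k) (hGpos k)) hdelC
  have hIso : IsInducedSubgraph (Gs i) (Gs j) := glue _ _ (hGpos i) (hGpos j) hemb
  have hlt : (Gs i).1 < (Gs j).1 := by
    rw [hGscard i, hGscard j]; exact hmono hij
  exact (hGsS i).1 ((hGsS j).2 (Gs i) hIso hlt)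
end

section
/- If a permutation π avoids 2143 and is sum decomposable, i.e., π = σ ⊕ τ for nonempty permutations σ and τ, then at least one of σ and τ is an increasing permutation (the identity). -/
/-- `π` contains the pattern `σ`: there is an increasing choice of positions of
`π` whose values appear in the same relative order as `σ`. -/
def Contains {n k : ℕ} (π : Equiv.Perm (Fin n)) (σ : Equiv.Perm (Fin k)) : Prop :=
  ∃ f : Fin k ↪o Fin n, ∀ j j' : Fin k, σ j < σ j' ↔ π (f j) < π (f j')

/-- The sum `σ ⊕ τ` of two permutations: `τ` is placed above and to the right of `σ`. -/
def sumPerm {k l : ℕ} (σ : Equiv.Perm (Fin k)) (τ : Equiv.Perm (Fin l)) :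
    Equiv.Perm (Fin (k + l)) :=
  finSumFinEquiv.symm.trans ((Equiv.sumCongr σ τ).trans finSumFinEquiv)

/-- The pattern 2143 (0-indexed one-line notation 1 0 3 2). -/
def p2143 : Equiv.Perm (Fin 4) := Equiv.mk ![1, 0, 3, 2] ![1, 0, 3, 2] (by decide) (by decide)

lemma exists_inversion {n : ℕ} (σ : Equiv.Perm (Fin n)) (hσ : σ ≠ Equiv.refl (Fin n)) :
    ∃ i j : Fin n, i < j ∧ σ j < σ i := by
  by_contra hc
  push_neg at hc
  have hm : StrictMono σ := fun i j hij =>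
    lt_of_le_of_ne (hc i j hij) (fun he => absurd (σ.injective he) (ne_of_lt hij))
  apply hσ
  have : (σ : Fin n → Fin n) = (Equiv.refl (Fin n) : Fin n → Fin n) := by
    apply (hm.range_inj strictMono_id).1
    simp [Set.range_eq_univ.2 σ.surjective]
  exact Equiv.ext fun x => congrFun this x

lemma sumPerm_castAdd {k l : ℕ} (σ : Equiv.Perm (Fin k)) (τ : Equiv.Perm (Fin l)) (i : Fin k) :
    sumPerm σ τ (Fin.castAdd l i) = Fin.castAdd l (σ i) := by
  simp [sumPerm]

lemma sumPerm_natAdd {k l : ℕ} (σ : Equiv.Perm (Fin k)) (τ : Equiv.Perm (Fin l)) (i : Fin l) :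
    sumPerm σ τ (Fin.natAdd k i) = Fin.natAdd k (τ i) := by
  simp [sumPerm]

/-- If a permutation avoids 2143 and is sum decomposable, `π = σ ⊕ τ` with `σ, τ`
nonempty, then at least one of `σ` and `τ` is increasing (the identity). -/
theorem sum_decomposable_avoid_2143 {k l : ℕ} (hk : 0 < k) (hl : 0 < l)
    (σ : Equiv.Perm (Fin k)) (τ : Equiv.Perm (Fin l))
    (h : ¬ Contains (sumPerm σ τ) p2143) :
    σ = Equiv.refl (Fin k) ∨ τ = Equiv.refl (Fin l) := by
  by_contra hc
  push_neg at hc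
  obtain ⟨i, j, hij, hval⟩ := exists_inversion σ hc.1
  obtain ⟨i', j', hij', hval'⟩ := exists_inversion τ hc.2
  apply h
  have hij_n : (i : ℕ) < j := hij
  have hij_n' : (i' : ℕ) < j' := hij'
  let g : Fin 4 → Fin (k + l) :=
    ![Fin.castAdd l i, Fin.castAdd l j, Fin.natAdd k i', Fin.natAdd k j']
  have hgv : ∀ a : Fin 4, (g a : ℕ) = ![(i : ℕ), j, k + i', k + j'] a := by
    intro a; fin_cases a <;> rfl
  have hsm : StrictMono g := by
    intro a b hab
    rw [Fin.lt_iff_val_lt_val, hgv a, hgv b]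
    have hab' : (a : ℕ) < b := hab
    fin_cases a <;> fin_cases b <;> simp_all <;> omega
  refine ⟨OrderEmbedding.ofStrictMono g hsm, ?_⟩
  have hπ : ∀ a : Fin 4, ((sumPerm σ τ) (g a) : ℕ) =
      ![(σ i : ℕ), σ j, k + τ i', k + τ j'] a := by
    intro a
    fin_cases a
    · show ((sumPerm σ τ) (Fin.castAdd l i) : ℕ) = _; rw [sumPerm_castAdd]; rfl
    · show ((sumPerm σ τ) (Fin.castAdd l j) : ℕ) = _; rw [sumPerm_castAdd]; rfl
    · show ((sumPerm σ τ) (Fin.natAdd k i') : ℕ) = _; rw [sumPerm_natAdd]; rfl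
    · show ((sumPerm σ τ) (Fin.natAdd k j') : ℕ) = _; rw [sumPerm_natAdd]; rfl
  have hp : ∀ a : Fin 4, (p2143 a : ℕ) = ![1, 0, 3, 2] a := by decide
  intro a b
  rw [Fin.lt_iff_val_lt_val, Fin.lt_iff_val_lt_val]
  have e1 : ((sumPerm σ τ) ((OrderEmbedding.ofStrictMono g hsm) a) : ℕ) =
      ![(σ i : ℕ), σ j, k + τ i', k + τ j'] a := hπ a
  have e2 : ((sumPerm σ τ) ((OrderEmbedding.ofStrictMono g hsm) b) : ℕ) =
      ![(σ i : ℕ), σ j, k + τ i', k + τ j'] b := hπ b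
  rw [e1, e2, hp a, hp b]
  have h1 : (σ j : ℕ) < σ i := hval
  have h2 : (τ j' : ℕ) < τ i' := hval'
  have h3 : (σ i : ℕ) < k := (σ i).isLt
  have h4 : (σ j : ℕ) < k := (σ j).isLt
  fin_cases a <;> fin_cases b <;> simp_all <;> omega
end

section
/- If a graph G is a split graph (its vertex set partitions into a clique and an independent set), then G contains neither 2K_2 nor C_4 as an induced subgraph. -/
/-- The graph `2K₂`: two disjoint edges on four vertices. -/
def twoK2 : SimpleGraph (Fin 4) :=
  SimpleGraph.fromRel (fun i j => ((i : ℕ) = 0 ∧ (j : ℕ) = 1) ∨ ((i : ℕ) = 2 ∧ (j : ℕ) = 3))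

/-- `G` is a split graph: its vertex set partitions into a clique and an
independent set. -/
def IsSplit {V : Type*} (G : SimpleGraph V) : Prop :=
  ∃ K : Set V, G.IsClique K ∧ ∀ a ∈ Kᶜ, ∀ b ∈ Kᶜ, ¬ G.Adj a b

/-- A split graph contains neither `2K₂` nor `C₄` as an induced subgraph. -/
theorem split_graph_no_2K2_no_C4 {V : Type*} (G : SimpleGraph V) (h : IsSplit G) :
    IsEmpty (twoK2 ↪g G) ∧ IsEmpty (SimpleGraph.cycleGraph 4 ↪g G) := by
  obtain ⟨K, hK, hI⟩ := h
  have key : ∀ {n : ℕ} (H : SimpleGraph (Fin n)) (f : H ↪g G) (a b : Fin n),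
      H.Adj a b → f a ∈ K ∨ f b ∈ K := by
    intro n H f a b hab
    by_contra hc
    push_neg at hc
    exact hI _ hc.1 _ hc.2 (f.map_adj_iff.mpr hab)
  have bad : ∀ {n : ℕ} (H : SimpleGraph (Fin n)) (f : H ↪g G) {a b : Fin n},
      f a ∈ K → f b ∈ K → a ≠ b → ¬ H.Adj a b → False := by
    intro n H f a b ha hb hne hnadj
    exact hnadj (f.map_adj_iff.mp (hK ha hb (f.injective.ne hne)))
  constructor
  · constructor
    intro f
    have h01 := key twoK2 f 0 1 (by simp only [twoK2, SimpleGraph.fromRel_adj]; decide)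
    have h23 := key twoK2 f 2 3 (by simp only [twoK2, SimpleGraph.fromRel_adj]; decide)
    rcases h01 with h1 | h1 <;> rcases h23 with h2 | h2 <;>
      exact bad twoK2 f h1 h2 (by decide) (by simp only [twoK2, SimpleGraph.fromRel_adj]; decide)
  · constructor
    intro f
    have h01 := key _ f 0 1 (by decide)
    have h23 := key _ f 2 3 (by decide)
    have h12 := key _ f 1 2 (by decide)
    have h30 := key _ f 3 0 (by decide)
    rcases h01 with h1 | h1 <;> rcases h23 with h2 | h2 <;>
      rcases h12 with h3 | h3 <;> rcases h30 with h4 | h4 <;>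
      first
      | exact bad _ f h1 h2 (by decide) (by decide)
      | exact bad _ f h1 h3 (by decide) (by decide)
      | exact bad _ f h1 h4 (by decide) (by decide)
      | exact bad _ f h2 h3 (by decide) (by decide)
      | exact bad _ f h2 h4 (by decide) (by decide)
      | exact bad _ f h3 h4 (by decide) (by decide)
end

section
/- Let W_k (k ≥ 4) denote the graph on vertices {u_1,…,u_k, v_1,…,v_k} where {u_1,…,u_k} is an independent set, {v_1,…,v_k} is a clique, and u_i is adjacent to v_j iff i = j or i ≤ j − 2; color u_1 and v_k white and all other vertices black. Then for 4 ≤ k < ℓ, the colored graph W_k does not embed into W_ℓ as a colored induced subgraph, so {W_k : k ≥ 4} is an infinite antichain of labelled graphs. -/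
/-- The graph `W_k` on vertices `u_0, …, u_{k-1}` (the left summands) and
`v_0, …, v_{k-1}` (the right summands): the `u`'s form an independent set, the
`v`'s form a clique, and `u_i` is adjacent to `v_j` iff `i = j` or `i + 2 ≤ j`. -/
def W (k : ℕ) : SimpleGraph (Fin k ⊕ Fin k) :=
  SimpleGraph.fromRel (fun a b =>
    (∃ i j : Fin k, a = Sum.inr i ∧ b = Sum.inr j ∧ i ≠ j) ∨
    (∃ i j : Fin k, a = Sum.inl i ∧ b = Sum.inr j ∧ ((i : ℕ) = (j : ℕ) ∨ (i : ℕ) + 2 ≤ (j : ℕ))))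

/-- The colouring of `W_k`: `u_0` (first vertex `u_1` of the spiral) and the
last clique vertex `v_{k-1}` are white; all other vertices are black. -/
def wColor (k : ℕ) (a : Fin k ⊕ Fin k) : Bool :=
  match a with
  | Sum.inl i => decide ((i : ℕ) = 0)
  | Sum.inr j => decide ((j : ℕ) = k - 1)

lemma W_adj_ll {k : ℕ} (a b : Fin k) : ¬ (W k).Adj (Sum.inl a) (Sum.inl b) := by
  simp [W, SimpleGraph.fromRel_adj]

lemma W_adj_lr {k : ℕ} (a b : Fin k) :
    (W k).Adj (Sum.inl a) (Sum.inr b) ↔ ((a:ℕ) = b ∨ (a:ℕ) + 2 ≤ b) := by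
  simp [W, SimpleGraph.fromRel_adj]

lemma W_adj_rr {k : ℕ} (a b : Fin k) : (W k).Adj (Sum.inr a) (Sum.inr b) ↔ a ≠ b := by
  simp [W, SimpleGraph.fromRel_adj]; tauto

lemma wColor_inl {k : ℕ} (i : Fin k) : wColor k (Sum.inl i) = decide ((i:ℕ) = 0) := rfl
lemma wColor_inr {k : ℕ} (j : Fin k) : wColor k (Sum.inr j) = decide ((j:ℕ) = k - 1) := rfl

lemma sum_split {α β : Type*} (s : α ⊕ β) :
    (∃ a, s = Sum.inl a) ∨ (∃ b, s = Sum.inr b) := by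
  cases s <;> simp

/-- For `4 ≤ k < ℓ`, the coloured graph `W_k` does not embed into `W_ℓ` as a
coloured induced subgraph; hence `{W_k : k ≥ 4}` is an infinite antichain of
labelled graphs (the colours form a two-element antichain, so an embedding must
preserve them exactly). -/
theorem W_labelled_antichain (k l : ℕ) (hk : 4 ≤ k) (hkl : k < l) :
    ¬ ∃ f : W k ↪g W l, ∀ a : Fin k ⊕ Fin k, wColor l (f a) = wColor k a := by
  rintro ⟨f, hf⟩
  obtain ⟨u0, hu0⟩ : ∃ u0 : Fin k, (u0 : ℕ) = 0 := ⟨⟨0, by omega⟩, rfl⟩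
  obtain ⟨u1, hu1⟩ : ∃ u1 : Fin k, (u1 : ℕ) = 1 := ⟨⟨1, by omega⟩, rfl⟩
  obtain ⟨vt, hvtv⟩ : ∃ vt : Fin k, (vt : ℕ) = k - 1 := ⟨⟨k - 1, by omega⟩, rfl⟩
  obtain ⟨l0, hl0⟩ : ∃ l0 : Fin l, (l0 : ℕ) = 0 := ⟨⟨0, by omega⟩, rfl⟩
  obtain ⟨lt, hlt⟩ : ∃ lt : Fin l, (lt : ℕ) = l - 1 := ⟨⟨l - 1, by omega⟩, rfl⟩
  have hwu0 : wColor l (f (Sum.inl u0)) = true := by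
    rw [hf, wColor_inl, hu0]; simp
  have hwvt : wColor l (f (Sum.inr vt)) = true := by
    rw [hf, wColor_inr, hvtv]; simp
  -- dispose of the swapped case: f (inl u0) = inl l0
  have hcaseA : f (Sum.inl u0) = Sum.inl l0 := by
    rcases sum_split (f (Sum.inl u0)) with ⟨a, h0⟩ | ⟨a, h0⟩
    · rw [h0, wColor_inl, decide_eq_true_iff] at hwu0
      rw [h0]
      exact congrArg _ (Fin.ext (by omega))
    · exfalso
      rw [h0, wColor_inr, decide_eq_true_iff] at hwu0
      rcases sum_split (f (Sum.inr vt)) with ⟨b, ht⟩ | ⟨b, ht⟩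
      · rw [ht, wColor_inl, decide_eq_true_iff] at hwvt
        -- u1 is adjacent to vt in W k
        have hadj : (W k).Adj (Sum.inl u1) (Sum.inr vt) := by
          rw [W_adj_lr]; right; omega
        have hadj' := f.map_adj_iff.2 hadj
        rw [ht] at hadj'
        rcases sum_split (f (Sum.inl u1)) with ⟨c, h1⟩ | ⟨c, h1⟩
        · rw [h1] at hadj'; exact W_adj_ll _ _ hadj'
        · -- u1 not adjacent to u0, but images are two inr's
          have hnadj : ¬ (W k).Adj (Sum.inl u1) (Sum.inl u0) := W_adj_ll _ _
          rw [← f.map_adj_iff, h1, h0, W_adj_rr, not_not] at hnadj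
          have : Sum.inl u1 = Sum.inl u0 := f.injective (by rw [h1, h0, hnadj])
          rw [Sum.inl.injEq] at this
          rw [this] at hu1
          omega
      · rw [ht, wColor_inr, decide_eq_true_iff] at hwvt
        have : Sum.inr vt = Sum.inl u0 := f.injective (by
          rw [ht, h0]; exact congrArg _ (Fin.ext (by omega)))
        simp at this
  -- hence f (inr vt) = inr lt
  have hcaseA' : f (Sum.inr vt) = Sum.inr lt := by
    rcases sum_split (f (Sum.inr vt)) with ⟨b, ht⟩ | ⟨b, ht⟩
    · exfalso
      rw [ht, wColor_inl, decide_eq_true_iff] at hwvt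
      have : Sum.inr vt = Sum.inl u0 := f.injective (by
        rw [ht, hcaseA]; exact congrArg _ (Fin.ext (by omega)))
      simp at this
    · rw [ht, wColor_inr, decide_eq_true_iff] at hwvt
      rw [ht]
      exact congrArg _ (Fin.ext (by omega))
  -- f (inr u0) (i.e. v_0) is an inr
  obtain ⟨d0, hd0⟩ : ∃ d : Fin l, f (Sum.inr u0) = Sum.inr d := by
    rcases sum_split (f (Sum.inr u0)) with ⟨d, h0⟩ | ⟨d, h0⟩
    · exfalso
      have hadj : (W k).Adj (Sum.inl u0) (Sum.inr u0) := by
        rw [W_adj_lr]; left; rfl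
      have := f.map_adj_iff.2 hadj
      rw [hcaseA, h0] at this
      exact W_adj_ll _ _ this
    · exact ⟨d, h0⟩
  -- every f (inl i) is an inl
  have hul : ∀ i : Fin k, ∃ a : Fin l, f (Sum.inl i) = Sum.inl a := by
    intro i
    rcases sum_split (f (Sum.inl i)) with ⟨a, hi⟩ | ⟨a, hi⟩
    · exact ⟨a, hi⟩
    · exfalso
      by_cases h0 : (i : ℕ) = 0
      · have : i = u0 := Fin.ext (by omega)
        rw [this, hcaseA] at hi; simp at hi
      · have hnadj : ¬ (W k).Adj (Sum.inl i) (Sum.inr u0) := by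
          rw [W_adj_lr]; omega
        rw [← f.map_adj_iff, hi, hd0, W_adj_rr, not_not] at hnadj
        have : Sum.inl i = Sum.inr u0 := f.injective (by rw [hi, hd0, hnadj])
        simp at this
  -- every f (inr j) is an inr
  have hvr : ∀ j : Fin k, ∃ b : Fin l, f (Sum.inr j) = Sum.inr b := by
    intro j
    obtain ⟨a, ha⟩ := hul j
    rcases sum_split (f (Sum.inr j)) with ⟨b, hj⟩ | ⟨b, hj⟩
    · exfalso
      have hadj : (W k).Adj (Sum.inl j) (Sum.inr j) := by rw [W_adj_lr]; left; rfl
      have := f.map_adj_iff.2 hadj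
      rw [ha, hj] at this
      exact W_adj_ll _ _ this
    · exact ⟨b, hj⟩
  -- the key induction: the index of f (inl ⟨n⟩) is at most n
  have key : ∀ n : ℕ, ∀ hn : n < k,
      ∃ a : Fin l, f (Sum.inl ⟨n, hn⟩) = Sum.inl a ∧ (a : ℕ) ≤ n := by
    intro n
    induction n with
    | zero =>
      intro hn
      refine ⟨l0, ?_, by omega⟩
      have : (⟨0, hn⟩ : Fin k) = u0 := Fin.ext (by simp [hu0])
      rw [this, hcaseA]
    | succ m ih =>
      intro hn
      have hm : m < k := by omega
      obtain ⟨a, hfa, ha⟩ := ih hm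
      obtain ⟨b, hfb⟩ := hvr ⟨m + 1, hn⟩
      obtain ⟨a', hfa'⟩ := hul ⟨m + 1, hn⟩
      -- u_m not adjacent to v_{m+1}
      have h1 : ¬ (W k).Adj (Sum.inl ⟨m, hm⟩) (Sum.inr ⟨m + 1, hn⟩) := by
        rw [W_adj_lr]; simp only [Fin.val_mk]; omega
      rw [← f.map_adj_iff, hfa, hfb, W_adj_lr] at h1
      -- u_{m+1} adjacent to v_{m+1}
      have h2 : (W k).Adj (Sum.inl ⟨m + 1, hn⟩) (Sum.inr ⟨m + 1, hn⟩) := by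
        rw [W_adj_lr]; left; rfl
      rw [← f.map_adj_iff, hfa', hfb, W_adj_lr] at h2
      push_neg at h1
      exact ⟨a', hfa', by omega⟩
  -- conclude
  have hk2 : k - 2 < k := by omega
  obtain ⟨a, hfa, ha⟩ := key (k - 2) hk2
  -- u_{k-2} not adjacent to v_{k-1}
  have h1 : ¬ (W k).Adj (Sum.inl ⟨k - 2, hk2⟩) (Sum.inr vt) := by
    rw [W_adj_lr]; simp; omega
  rw [← f.map_adj_iff, hfa, hcaseA', W_adj_lr] at h1
  push_neg at h1
  omega
end
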